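/- For every h : ℕ → ℕ: (1) BA_Lip(ω^ω) implies BA_Lip(Π n, Fin (h n)), i.e. if for all ℵ1-dense A, B ⊆ ℕ → ℕ there is a Lipschitz f injective on A with f '' A ⊆ B, then for all ℵ1-dense A, B ⊆ Π n, Fin (h n) there is a Lipschitz g : (Π n, Fin (h n)) → (Π n, Fin (h n)) injective on A with g '' A ⊆ B; and (2) B̄A_Lip(ω^ω) implies B̄A_Lip(Π n, Fin (h n)), i.e. if for all ℵ1-dense A, B ⊆ ℕ → ℕ there is a Lipschitz f injective on A with f '' A = B, then for all ℵ1-dense A, B ⊆ Π n, Fin (h n) there is a sequence of Lipschitz functions gₘ on Π n, Fin (h n) with B = ⋃ₘ gₘ '' A. -/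
import Mathlib


/-- A set `S` in a topological space is `ℵ₁`-dense if its intersection with every nonempty
open set has cardinality `ℵ₁`. -/
def Aleph1Dense {Z : Type*} [TopologicalSpace Z] (S : Set Z) : Prop :=
  ∀ U : Set Z, IsOpen U → U.Nonempty → Cardinal.mk ↥(S ∩ U) = Cardinal.aleph 1

/-- `f` is Lipschitz: if `x` and `y` agree below `n` then so do `f x` and `f y`. -/
def IsLip {X : ℕ → Type*} (f : (∀ n, X n) → (∀ n, X n)) : Prop :=
  ∀ x y : ∀ n, X n, ∀ n : ℕ, (∀ i < n, x i = y i) → ∀ i < n, f x i = f y i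

open Cardinal Set

namespace Stmt11Aux

/-! ### Cylinders -/

/-- The cylinder of all sequences agreeing with `x` below `ℓ`. -/
def cyl {X : ℕ → Type*} (x : ∀ n, X n) (ℓ : ℕ) : Set (∀ n, X n) := {y | ∀ i < ℓ, y i = x i}

lemma isOpen_cyl {X : ℕ → Type*} [∀ n, TopologicalSpace (X n)] [∀ n, DiscreteTopology (X n)]
    (x : ∀ n, X n) (ℓ : ℕ) : IsOpen (cyl x ℓ) := by
  have : cyl x ℓ = Set.pi (Set.Iio ℓ) (fun i => {x i}) := by
    ext y; simp [cyl, Set.mem_pi]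
  rw [this]
  exact isOpen_set_pi (Set.finite_Iio ℓ) (fun a _ => isOpen_discrete _)

lemma mem_cyl_self {X : ℕ → Type*} (x : ∀ n, X n) (ℓ : ℕ) : x ∈ cyl x ℓ := fun _ _ => rfl

lemma exists_cyl_subset {X : ℕ → Type*} [∀ n, TopologicalSpace (X n)]
    {U : Set (∀ n, X n)} (hU : IsOpen U) {x : ∀ n, X n} (hx : x ∈ U) :
    ∃ ℓ, cyl x ℓ ⊆ U := by
  obtain ⟨I, u, hu, hsub⟩ := isOpen_pi_iff.mp hU x hx
  refine ⟨(I.sup id) + 1, fun y hy => hsub fun a ha => ?_⟩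
  have hya : y a = x a := hy a (Nat.lt_succ_of_le (Finset.le_sup (f := id) ha))
  rw [hya]
  exact (hu a ha).2

/-! ### A disjoint refinement lemma -/

/-- Given countably many sets of size `ℵ₁`, we can choose pairwise disjoint subsets of
size `ℵ₁`. -/
lemma exists_disjoint_refinement {α : Type} (X : ℕ → Set α)
    (hX : ∀ j, #(X j) = aleph 1) :
    ∃ T : ℕ → Set α, (∀ j, T j ⊆ X j) ∧ (∀ j k x, x ∈ T j → x ∈ T k → j = k) ∧
      ∀ j, #(T j) = aleph 1 := by
  classical
  have hmkO : #((aleph 1).ord.ToType) = aleph 1 := mk_ord_toType _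
  have hONℕ : #((aleph 1).ord.ToType × ℕ) = aleph 1 := by
    rw [mk_prod, Cardinal.lift_id, Cardinal.lift_id, mk_nat, hmkO,
      Cardinal.mul_eq_max (aleph0_le_aleph 1) le_rfl, max_eq_left (aleph0_le_aleph 1)]
  obtain ⟨e⟩ : Nonempty ((aleph 1).ord.ToType ≃ (aleph 1).ord.ToType × ℕ) :=
    Cardinal.eq.mp (by rw [hmkO, hONℕ])
  have hfib : ∀ j, #{a : (aleph 1).ord.ToType | (e a).2 = j} = aleph 1 := by
    intro j
    apply le_antisymm
    · exact (mk_subtype_le _).trans hmkO.le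
    · have hinj : Function.Injective
          (fun a : (aleph 1).ord.ToType =>
            (⟨e.symm (a, j), by simp⟩ : {a : (aleph 1).ord.ToType | (e a).2 = j})) := by
        intro a b hab
        simpa using congrArg (fun s => (e s.val).1) hab
      have := mk_le_of_injective hinj
      rwa [hmkO] at this
  have wf : WellFounded ((· < ·) : (aleph 1).ord.ToType → (aleph 1).ord.ToType → Prop) :=
    IsWellFounded.wf
  have fresh : ∀ (a : (aleph 1).ord.ToType) (ih : ∀ b, b < a → α),
      (X (e a).2 \ {y | ∃ b, ∃ hb : b < a, ih b hb = y}).Nonempty := by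
    intro a ih
    rw [Set.nonempty_iff_ne_empty]
    intro hemp
    have hsub : X (e a).2 ⊆ {y | ∃ b, ∃ hb : b < a, ih b hb = y} := Set.diff_eq_empty.mp hemp
    have h1 : #(X (e a).2) ≤ #{y | ∃ b, ∃ hb : b < a, ih b hb = y} := mk_le_mk_of_subset hsub
    have h2 : #{y | ∃ b, ∃ hb : b < a, ih b hb = y} ≤ #(Set.Iio a) := by
      apply mk_le_of_surjective (f := fun b : Set.Iio a =>
        (⟨ih b.1 b.2, b.1, b.2, rfl⟩ : {y | ∃ b, ∃ hb : b < a, ih b hb = y}))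
      rintro ⟨y, b, hb, rfl⟩
      exact ⟨⟨b, hb⟩, rfl⟩
    have h3 : #(Set.Iio a) < aleph 1 := mk_Iio_ord_toType a
    rw [hX] at h1
    exact absurd ((h1.trans h2).trans_lt h3) (lt_irrefl _)
  set F : (aleph 1).ord.ToType → α := wf.fix (fun a ih => (fresh a ih).choose) with hFdef
  have hFeq : ∀ a, F a = (fresh a (fun b _ => F b)).choose := fun a => wf.fix_eq _ a
  have hFspec : ∀ a, F a ∈ X (e a).2 ∧ ∀ b, b < a → F b ≠ F a := by
    intro a
    have hspec := (fresh a (fun b _ => F b)).choose_spec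
    rw [← hFeq a] at hspec
    exact ⟨hspec.1, fun b hb hbad => hspec.2 ⟨b, hb, hbad⟩⟩
  have hFinj : Function.Injective F := by
    intro a b hab
    rcases lt_trichotomy a b with hlt | heq | hlt
    · exact absurd hab ((hFspec b).2 a hlt)
    · exact heq
    · exact absurd hab.symm ((hFspec a).2 b hlt)
  refine ⟨fun j => F '' {a | (e a).2 = j}, ?_, ?_, ?_⟩
  · rintro j _ ⟨a, ha, rfl⟩
    rw [← ha]; exact (hFspec a).1
  · rintro j k x ⟨a, ha, rfl⟩ ⟨b, hb, hba⟩
    rw [← ha, ← hb, hFinj hba]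
  · intro j
    rw [mk_image_eq hFinj, hfib j]

/-! ### Encoding/decoding between `Π n, Fin (h n)` and `ω^ω` -/

variable {h : ℕ → ℕ}

def res (hp : ∀ n, 0 < h n) (x : ℕ → ℕ) : ∀ n, Fin (h n) :=
  fun n => ⟨x n % h n, Nat.mod_lt _ (hp n)⟩

def enc (z : ∀ n, Fin (h n)) (q : ℕ → ℕ) : ℕ → ℕ := fun n => (z n : ℕ) + h n * q n

def quo (h : ℕ → ℕ) (x : ℕ → ℕ) : ℕ → ℕ := fun n => x n / h n

lemma res_enc (hp : ∀ n, 0 < h n) (z : ∀ n, Fin (h n)) (q : ℕ → ℕ) :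
    res hp (enc z q) = z := by
  funext n
  apply Fin.ext
  show ((z n : ℕ) + h n * q n) % h n = (z n : ℕ)
  rw [Nat.add_mul_mod_self_left, Nat.mod_eq_of_lt (z n).isLt]

lemma quo_enc (hp : ∀ n, 0 < h n) (z : ∀ n, Fin (h n)) (q : ℕ → ℕ) :
    quo h (enc z q) = q := by
  funext n
  show ((z n : ℕ) + h n * q n) / h n = q n
  rw [Nat.add_mul_div_left _ _ (hp n), Nat.div_eq_of_lt (z n).isLt, zero_add]

lemma enc_res_quo (hp : ∀ n, 0 < h n) (x : ℕ → ℕ) :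
    enc (res hp x) (quo h x) = x := by
  funext n
  show x n % h n + h n * (x n / h n) = x n
  exact Nat.mod_add_div _ _

lemma enc_left_injective (hp : ∀ n, 0 < h n) (q : ℕ → ℕ) :
    Function.Injective (fun z : ∀ n, Fin (h n) => enc z q) := by
  intro z z' hzz
  have := congrArg (res hp) hzz
  rwa [res_enc, res_enc] at this

/-! ### An enumeration of finite patterns -/

noncomputable def L : ℕ ≃ List ℕ := (Denumerable.eqv (List ℕ)).symm

noncomputable def pat (k : ℕ) : ℕ → ℕ := fun n => (L k).getD n 0

lemma pat_spec (x : ℕ → ℕ) (ℓ : ℕ) :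
    ∃ k, (L k).length = ℓ ∧ ∀ i < ℓ, pat k i = x i := by
  refine ⟨L.symm (List.ofFn fun i : Fin ℓ => x i), ?_, ?_⟩
  · simp
  · intro i hi
    show (L (L.symm (List.ofFn fun i : Fin ℓ => x i))).getD i 0 = x i
    rw [Equiv.apply_symm_apply]
    rw [List.getD_eq_getElem _ _ (by simpa using hi)]
    simp

/-! ### The derived dense subsets of `ω^ω` -/

def goodSet (hp : ∀ n, 0 < h n) (A : Set (∀ n, Fin (h n))) : Set (ℕ → ℕ) :=
  {x | res hp x ∈ A ∧ ∃ m, quo h x = pat m}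

lemma enc_pat_mem_goodSet (hp : ∀ n, 0 < h n) {A : Set (∀ n, Fin (h n))}
    {a : ∀ n, Fin (h n)} (ha : a ∈ A) (m : ℕ) : enc a (pat m) ∈ goodSet hp A :=
  ⟨by rw [res_enc]; exact ha, m, quo_enc hp a (pat m)⟩

lemma mk_of_dense {Z : Type} [TopologicalSpace Z] [Nonempty Z] {A : Set Z}
    (hA : Aleph1Dense A) : #A = aleph 1 := by
  have := hA univ isOpen_univ univ_nonempty
  rwa [inter_univ] at this

lemma goodSet_dense (hp : ∀ n, 0 < h n) {A : Set (∀ n, Fin (h n))} (hA : Aleph1Dense A) :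
    Aleph1Dense (goodSet hp A) := by
  classical
  haveI : Nonempty (∀ n, Fin (h n)) := ⟨fun n => ⟨0, hp n⟩⟩
  rintro U hU ⟨x, hxU⟩
  obtain ⟨ℓ, hℓ⟩ := exists_cyl_subset hU hxU
  apply le_antisymm
  · -- upper bound
    have hup : #(goodSet hp A) ≤ #(↥A × ℕ) := by
      apply mk_le_of_injective
        (f := fun x : ↥(goodSet hp A) => ((⟨res hp x.1, x.2.1⟩ : ↥A), x.2.2.choose))
      intro x y hxy
      have h1 : res hp x.1 = res hp y.1 := congrArg Subtype.val (congrArg Prod.fst hxy)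
      have h2 : x.2.2.choose = y.2.2.choose := congrArg Prod.snd hxy
      have hx := x.2.2.choose_spec
      have hy := y.2.2.choose_spec
      apply Subtype.ext
      calc x.1 = enc (res hp x.1) (quo h x.1) := (enc_res_quo hp x.1).symm
        _ = enc (res hp y.1) (quo h y.1) := by rw [h1, hx, hy, h2]
        _ = y.1 := enc_res_quo hp y.1
    have hAcard : #(↥A × ℕ) = aleph 1 := by
      rw [mk_prod, Cardinal.lift_id, Cardinal.lift_id, mk_nat, mk_of_dense hA,
        Cardinal.mul_eq_max (aleph0_le_aleph 1) le_rfl, max_eq_left (aleph0_le_aleph 1)]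
    calc #(goodSet hp A ∩ U : Set _) ≤ #(goodSet hp A) := mk_le_mk_of_subset inter_subset_left
      _ ≤ #(↥A × ℕ) := hup
      _ = aleph 1 := hAcard
  · -- lower bound
    obtain ⟨k, _, hk2⟩ := pat_spec (quo h x) ℓ
    have hcylZ : #(A ∩ cyl (res hp x) ℓ : Set _) = aleph 1 :=
      hA _ (isOpen_cyl _ _) ⟨res hp x, mem_cyl_self _ _⟩
    rw [← hcylZ]
    have hmem : ∀ a : ↥(A ∩ cyl (res hp x) ℓ), enc a.1 (pat k) ∈ goodSet hp A ∩ U := by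
      intro a
      refine ⟨enc_pat_mem_goodSet hp a.2.1 k, hℓ ?_⟩
      intro i hi
      have hai : (a.1 i : ℕ) = x i % h i := congrArg Fin.val (a.2.2 i hi)
      show (a.1 i : ℕ) + h i * pat k i = x i
      rw [hai, hk2 i hi]
      exact Nat.mod_add_div _ _
    apply mk_le_of_injective (f := fun a : ↥(A ∩ cyl (res hp x) ℓ) => (⟨_, hmem a⟩ :
      ↥(goodSet hp A ∩ U)))
    intro a b hab
    have := enc_left_injective hp (pat k) (congrArg Subtype.val hab)
    exact Subtype.ext this

/-! ### Part 2 -/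

lemma part2 (hp : ∀ n, 0 < h n)
    (H : ∀ A B : Set (ℕ → ℕ), Aleph1Dense A → Aleph1Dense B →
      ∃ f : (ℕ → ℕ) → (ℕ → ℕ), IsLip f ∧ Set.InjOn f A ∧ f '' A = B)
    (A B : Set (∀ n, Fin (h n))) (hA : Aleph1Dense A) (hB : Aleph1Dense B) :
    ∃ g : ℕ → (∀ n, Fin (h n)) → (∀ n, Fin (h n)),
      (∀ m, IsLip (g m)) ∧ B = ⋃ m, g m '' A := by
  obtain ⟨f, hf, -, hfim⟩ := H _ _ (goodSet_dense hp hA) (goodSet_dense hp hB)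
  refine ⟨fun m z => res hp (f (enc z (pat m))), ?_, ?_⟩
  · intro m x y n hxy i hi
    have hen : ∀ j < n, enc x (pat m) j = enc y (pat m) j := by
      intro j hj
      show (x j : ℕ) + h j * pat m j = (y j : ℕ) + h j * pat m j
      rw [congrArg Fin.val (hxy j hj)]
    have h2 := hf _ _ n hen i hi
    apply Fin.ext
    show f (enc x (pat m)) i % h i = f (enc y (pat m)) i % h i
    rw [h2]
  · ext b
    constructor
    · intro hb
      have hmem : enc b (pat 0) ∈ goodSet hp B := enc_pat_mem_goodSet hp hb 0
      rw [← hfim] at hmem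
      obtain ⟨x, hxA, hfx⟩ := hmem
      obtain ⟨m, hm⟩ := hxA.2
      refine mem_iUnion.mpr ⟨m, ⟨res hp x, hxA.1, ?_⟩⟩
      show res hp (f (enc (res hp x) (pat m))) = b
      rw [← hm, enc_res_quo hp x, hfx, res_enc]
    · intro hb
      obtain ⟨m, hmm⟩ := mem_iUnion.mp hb
      obtain ⟨a, haA, rfl⟩ := hmm
      have : f (enc a (pat m)) ∈ goodSet hp B := by
        rw [← hfim]
        exact ⟨enc a (pat m), enc_pat_mem_goodSet hp haA m, rfl⟩
      exact this.1

/-! ### Part 1 -/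

lemma part1 (hp : ∀ n, 0 < h n)
    (H : ∀ A B : Set (ℕ → ℕ), Aleph1Dense A → Aleph1Dense B →
      ∃ f : (ℕ → ℕ) → (ℕ → ℕ), IsLip f ∧ Set.InjOn f A ∧ f '' A ⊆ B)
    (A B : Set (∀ n, Fin (h n))) (hA : Aleph1Dense A) (hB : Aleph1Dense B) :
    ∃ g : (∀ n, Fin (h n)) → (∀ n, Fin (h n)),
      IsLip g ∧ Set.InjOn g A ∧ g '' A ⊆ B := by
  classical
  haveI : Nonempty (∀ n, Fin (h n)) := ⟨fun n => ⟨0, hp n⟩⟩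
  -- disjoint refinement of the traces of B on all cylinders
  have hX : ∀ k, #(B ∩ cyl (res hp (pat k)) ((L k).length) : Set _) = aleph 1 := fun k =>
    hB _ (isOpen_cyl _ _) ⟨res hp (pat k), mem_cyl_self _ _⟩
  obtain ⟨T, hTsub, hTdisj, hTmk⟩ := exists_disjoint_refinement _ hX
  set B' : Set (ℕ → ℕ) := ⋃ k, (fun b => enc b (quo h (pat k))) '' T k with hB'def
  -- B' is ℵ₁-dense
  have hB'dense : Aleph1Dense B' := by
    rintro U hU ⟨x, hxU⟩
    obtain ⟨ℓ, hℓ⟩ := exists_cyl_subset hU hxU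
    obtain ⟨k, hk1, hk2⟩ := pat_spec x ℓ
    apply le_antisymm
    · have h1 : #B' ≤ #ℕ * ⨆ k, #((fun b => enc b (quo h (pat k))) '' T k) :=
        mk_iUnion_le _
      have h2 : ⨆ k, #((fun b => enc b (quo h (pat k))) '' T k) ≤ aleph 1 :=
        ciSup_le' fun k => mk_image_le.trans (hTmk k).le
      have h3 : #B' ≤ aleph 1 := by
        refine h1.trans ?_
        rw [mk_nat]
        calc ℵ₀ * ⨆ k, #((fun b => enc b (quo h (pat k))) '' T k)
            ≤ ℵ₀ * aleph 1 := mul_le_mul_right h2 _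
          _ = aleph 1 := by
            rw [Cardinal.mul_eq_max le_rfl (aleph0_le_aleph 1),
              max_eq_right (aleph0_le_aleph 1)]
      exact (mk_le_mk_of_subset inter_subset_left).trans h3
    · have hmem : ∀ b : ↥(T k), enc b.1 (quo h (pat k)) ∈ B' ∩ U := by
        intro b
        constructor
        · exact mem_iUnion.mpr ⟨k, ⟨b.1, b.2, rfl⟩⟩
        · apply hℓ
          intro i hi
          have hbc : (b.1 i : ℕ) = pat k i % h i := by
            have := (hTsub k b.2).2 i (by rw [hk1]; exact hi)
            exact congrArg Fin.val this
          show (b.1 i : ℕ) + h i * (pat k i / h i) = x i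
          rw [hbc, Nat.mod_add_div, hk2 i hi]
      rw [← hTmk k]
      apply mk_le_of_injective (f := fun b : ↥(T k) => (⟨_, hmem b⟩ : ↥(B' ∩ U)))
      intro a b hab
      have := enc_left_injective hp (quo h (pat k)) (congrArg Subtype.val hab)
      exact Subtype.ext this
  -- res is injective on B', and res '' B' ⊆ B
  have hresinj : Set.InjOn (res hp) B' := by
    intro x hx y hy hxy
    obtain ⟨k, hk⟩ := mem_iUnion.mp hx
    obtain ⟨b, hbT, rfl⟩ := hk
    obtain ⟨k', hk'⟩ := mem_iUnion.mp hy
    obtain ⟨b', hbT', rfl⟩ := hk'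
    rw [res_enc, res_enc] at hxy
    subst hxy
    rw [hTdisj k k' b hbT hbT']
  have hressub : ∀ x ∈ B', res hp x ∈ B := by
    intro x hx
    obtain ⟨k, hk⟩ := mem_iUnion.mp hx
    obtain ⟨b, hbT, rfl⟩ := hk
    rw [res_enc]
    exact (hTsub k hbT).1
  -- apply the hypothesis
  obtain ⟨f, hfLip, hfinj, hfim⟩ := H _ _ (goodSet_dense hp hA) hB'dense
  refine ⟨fun z => res hp (f (enc z (pat 0))), ?_, ?_, ?_⟩
  · intro x y n hxy i hi
    have hen : ∀ j < n, enc x (pat 0) j = enc y (pat 0) j := by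
      intro j hj
      show (x j : ℕ) + h j * pat 0 j = (y j : ℕ) + h j * pat 0 j
      rw [congrArg Fin.val (hxy j hj)]
    have h2 := hfLip _ _ n hen i hi
    apply Fin.ext
    show f (enc x (pat 0)) i % h i = f (enc y (pat 0)) i % h i
    rw [h2]
  · intro a ha a' ha' hgeq
    have h1 : enc a (pat 0) ∈ goodSet hp A := enc_pat_mem_goodSet hp ha 0
    have h2 : enc a' (pat 0) ∈ goodSet hp A := enc_pat_mem_goodSet hp ha' 0
    have hb1 : f (enc a (pat 0)) ∈ B' := hfim ⟨_, h1, rfl⟩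
    have hb2 : f (enc a' (pat 0)) ∈ B' := hfim ⟨_, h2, rfl⟩
    have heqf : f (enc a (pat 0)) = f (enc a' (pat 0)) := hresinj hb1 hb2 hgeq
    have heqe : enc a (pat 0) = enc a' (pat 0) := hfinj h1 h2 heqf
    have := congrArg (res hp) heqe
    rwa [res_enc, res_enc] at this
  · rintro _ ⟨a, ha, rfl⟩
    exact hressub _ (hfim ⟨_, enc_pat_mem_goodSet hp ha 0, rfl⟩)

end Stmt11Aux

/-- For every `h : ℕ → ℕ`: `BA_Lip(ω^ω)` implies `BA_Lip(Π n, Fin (h n))`, and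
`B̄A_Lip(ω^ω)` implies `B̄A_Lip(Π n, Fin (h n))`. -/
theorem stmt_11 (h : ℕ → ℕ) :
    ((∀ A B : Set (ℕ → ℕ), Aleph1Dense A → Aleph1Dense B →
        ∃ f : (ℕ → ℕ) → (ℕ → ℕ), IsLip f ∧ Set.InjOn f A ∧ f '' A ⊆ B) →
      ∀ A B : Set (∀ n, Fin (h n)), Aleph1Dense A → Aleph1Dense B →
        ∃ g : (∀ n, Fin (h n)) → (∀ n, Fin (h n)), IsLip g ∧ Set.InjOn g A ∧ g '' A ⊆ B) ∧
    ((∀ A B : Set (ℕ → ℕ), Aleph1Dense A → Aleph1Dense B →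
        ∃ f : (ℕ → ℕ) → (ℕ → ℕ), IsLip f ∧ Set.InjOn f A ∧ f '' A = B) →
      ∀ A B : Set (∀ n, Fin (h n)), Aleph1Dense A → Aleph1Dense B →
        ∃ g : ℕ → (∀ n, Fin (h n)) → (∀ n, Fin (h n)),
          (∀ m, IsLip (g m)) ∧ B = ⋃ m, g m '' A) := by
  by_cases hp : ∀ n, 0 < h n
  · exact ⟨fun H A B hA hB => Stmt11Aux.part1 hp H A B hA hB,
      fun H A B hA hB => Stmt11Aux.part2 hp H A B hA hB⟩
  · push_neg at hp
    obtain ⟨n0, hn0⟩ := hp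
    haveI : IsEmpty (∀ n, Fin (h n)) := ⟨fun z => by
      have := (z n0).isLt
      omega⟩
    constructor
    · intro _ A B _ _
      refine ⟨id, fun x y n hxy i hi => hxy i hi, fun x _ _ _ _ => (IsEmpty.false x).elim, ?_⟩
      rw [Set.eq_empty_of_isEmpty A]
      simp
    · intro _ A B _ _
      refine ⟨fun _ => id, fun m x y n hxy i hi => hxy i hi, ?_⟩
      rw [Set.eq_empty_of_isEmpty A, Set.eq_empty_of_isEmpty B]
      simp
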